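/- Let ψ : ℝ² → ℝ² be the time-one flow of the vector field H(y,z) = q₀(y,z)ᵏ · (y,−z), where q₀(y,z) = 1 − exp(−y²−z²) and k ≥ 1. Then ψ fixes (0,0), maps the horizontal axis ℝ×{0} to itself and the vertical axis {0}×ℝ to itself, and for every v ∈ ℝ² not on the vertical axis, ‖ψᵐ(v)‖ → ∞ as m → ∞. -/

import Mathlib

/-- q₀(y,z) = 1 − exp(−y²−z²). -/
noncomputable def q0 : ℝ × ℝ → ℝ := fun p => 1 - Real.exp (-p.1 ^ 2 - p.2 ^ 2)

/-- The vector field H = q₀ᵏ · H₀, where H₀(y,z) = (y,−z). -/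
noncomputable def Hfield (k : ℕ) : ℝ × ℝ → ℝ × ℝ :=
  fun p => (q0 p) ^ k • ((p.1, -p.2) : ℝ × ℝ)

lemma q0_nonneg (p : ℝ × ℝ) : 0 ≤ q0 p := by
  have h : Real.exp (-p.1 ^ 2 - p.2 ^ 2) ≤ 1 := by
    rw [show (1:ℝ) = Real.exp 0 from (Real.exp_zero).symm]
    exact Real.exp_le_exp.2 (by nlinarith [sq_nonneg p.1, sq_nonneg p.2])
  simp only [q0]; linarith

lemma q0_continuous : Continuous q0 := by
  unfold q0; fun_prop

/-- Explicit solution formula for the flow of `Hfield k`. -/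
lemma flow_formula (k : ℕ) (Φ : ℝ → ℝ × ℝ → ℝ × ℝ)
    (hΦ0 : ∀ p, Φ 0 p = p)
    (hΦderiv : ∀ p t, HasDerivAt (fun s => Φ s p) (Hfield k (Φ t p)) t)
    (p : ℝ × ℝ) :
    ∃ A : ℝ → ℝ, A 0 = 0 ∧
      (∀ t, HasDerivAt A (q0 (Φ t p) ^ k) t) ∧
      (∀ t, Φ t p = (p.1 * Real.exp (A t), p.2 * Real.exp (-A t))) := by
  have hflowcont : Continuous (fun s => Φ s p) :=
    continuous_iff_continuousAt.2 fun t => (hΦderiv p t).continuousAt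
  set a : ℝ → ℝ := fun s => q0 (Φ s p) ^ k with ha_def
  have ha_cont : Continuous a := (q0_continuous.comp hflowcont).pow k
  set A : ℝ → ℝ := fun t => ∫ s in (0:ℝ)..t, a s with hA_def
  have hA0 : A 0 = 0 := intervalIntegral.integral_same
  have hA' : ∀ t, HasDerivAt A (a t) t := by
    intro t
    exact intervalIntegral.integral_hasDerivAt_right
      (ha_cont.intervalIntegrable 0 t)
      (ha_cont.stronglyMeasurableAtFilter _ _)
      ha_cont.continuousAt
  refine ⟨A, hA0, hA', ?_⟩
  -- y-component
  have hy' : ∀ t, HasDerivAt (fun s => (Φ s p).1) (a t * (Φ t p).1) t := by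
    intro t
    have : HasDerivAt (fun s => (Φ s p).1) _ t := hasFDerivAt_fst.comp_hasDerivAt t (hΦderiv p t)
    simpa [Hfield, ha_def] using this
  have hz' : ∀ t, HasDerivAt (fun s => (Φ s p).2) (-(a t * (Φ t p).2)) t := by
    intro t
    have : HasDerivAt (fun s => (Φ s p).2) _ t := hasFDerivAt_snd.comp_hasDerivAt t (hΦderiv p t)
    simpa [Hfield, ha_def, mul_comm, neg_mul, mul_neg] using this
  have hgy : ∀ t, (Φ t p).1 * Real.exp (-A t) = p.1 := by
    have hdiff : ∀ t, HasDerivAt (fun s => (Φ s p).1 * Real.exp (-A s)) 0 t := by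
      intro t
      have h := (hy' t).mul ((hA' t).neg.exp)
      refine h.congr_deriv ?_
      simp only [Pi.neg_apply]; ring
    intro t
    have hconst : (fun s => (Φ s p).1 * Real.exp (-A s)) t
        = (fun s => (Φ s p).1 * Real.exp (-A s)) 0 :=
      is_const_of_deriv_eq_zero (fun s => (hdiff s).differentiableAt)
        (fun s => (hdiff s).deriv) t 0
    simpa [hΦ0, hA0] using hconst
  have hgz : ∀ t, (Φ t p).2 * Real.exp (A t) = p.2 := by
    have hdiff : ∀ t, HasDerivAt (fun s => (Φ s p).2 * Real.exp (A s)) 0 t := by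
      intro t
      have h := (hz' t).mul ((hA' t).exp)
      refine h.congr_deriv ?_
      ring
    intro t
    have hconst : (fun s => (Φ s p).2 * Real.exp (A s)) t
        = (fun s => (Φ s p).2 * Real.exp (A s)) 0 :=
      is_const_of_deriv_eq_zero (fun s => (hdiff s).differentiableAt)
        (fun s => (hdiff s).deriv) t 0
    simpa [hΦ0, hA0] using hconst
  intro t
  have hy : (Φ t p).1 = p.1 * Real.exp (A t) := by
    have h := hgy t
    rw [Real.exp_neg] at h
    field_simp at h
    linarith [h]
  have hz : (Φ t p).2 = p.2 * Real.exp (-A t) := by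
    have h := hgz t
    rw [Real.exp_neg]
    field_simp
    linarith [h]
  exact Prod.ext hy hz

/-- The time-one map ψ of the flow of H = q₀ᵏ·H₀ fixes the origin, preserves
the horizontal and vertical axes, and every point off the vertical axis
escapes to infinity under forward iteration of ψ. -/
theorem stmt14 (k : ℕ) (hk : 1 ≤ k)
    (Φ : ℝ → ℝ × ℝ → ℝ × ℝ)
    (hΦ0 : ∀ p, Φ 0 p = p)
    (hΦadd : ∀ s t p, Φ (s + t) p = Φ s (Φ t p))
    (hΦderiv : ∀ p t, HasDerivAt (fun s => Φ s p) (Hfield k (Φ t p)) t)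
    (ψ : ℝ × ℝ → ℝ × ℝ) (hψ : ψ = Φ 1) :
    ψ (0, 0) = (0, 0) ∧
    ψ '' {p : ℝ × ℝ | p.2 = 0} = {p : ℝ × ℝ | p.2 = 0} ∧
    ψ '' {p : ℝ × ℝ | p.1 = 0} = {p : ℝ × ℝ | p.1 = 0} ∧
    (∀ v : ℝ × ℝ, v.1 ≠ 0 →
      Filter.Tendsto (fun m => ‖ψ^[m] v‖) Filter.atTop Filter.atTop) := by
  subst hψ
  have hinv : ∀ q, Φ 1 (Φ (-1) q) = q := by
    intro q
    rw [← hΦadd]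
    norm_num [hΦ0]
  refine ⟨?_, ?_, ?_, ?_⟩
  · obtain ⟨A, hA0, hA', hsol⟩ := flow_formula k Φ hΦ0 hΦderiv (0, 0)
    rw [hsol 1]; simp
  · apply Set.Subset.antisymm
    · rintro q ⟨p, hp, rfl⟩
      obtain ⟨A, hA0, hA', hsol⟩ := flow_formula k Φ hΦ0 hΦderiv p
      simp only [Set.mem_setOf_eq] at hp ⊢
      rw [hsol 1]
      simp [hp]
    · intro q hq
      refine ⟨Φ (-1) q, ?_, hinv q⟩
      obtain ⟨A, hA0, hA', hsol⟩ := flow_formula k Φ hΦ0 hΦderiv q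
      simp only [Set.mem_setOf_eq] at hq ⊢
      rw [hsol (-1)]
      simp [hq]
  · apply Set.Subset.antisymm
    · rintro q ⟨p, hp, rfl⟩
      obtain ⟨A, hA0, hA', hsol⟩ := flow_formula k Φ hΦ0 hΦderiv p
      simp only [Set.mem_setOf_eq] at hp ⊢
      rw [hsol 1]
      simp [hp]
    · intro q hq
      refine ⟨Φ (-1) q, ?_, hinv q⟩
      obtain ⟨A, hA0, hA', hsol⟩ := flow_formula k Φ hΦ0 hΦderiv q
      simp only [Set.mem_setOf_eq] at hq ⊢
      rw [hsol (-1)]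
      simp [hq]
  · intro v hv
    obtain ⟨A, hA0, hA', hsol⟩ := flow_formula k Φ hΦ0 hΦderiv v
    set c : ℝ := 1 - Real.exp (-v.1 ^ 2) with hc_def
    have hc : 0 < c := by
      have : Real.exp (-v.1 ^ 2) < 1 := by
        rw [show (1:ℝ) = Real.exp 0 from (Real.exp_zero).symm]
        exact Real.exp_lt_exp.2 (neg_lt_zero.2 (by positivity))
      linarith
    -- A is monotone
    have hAmono : Monotone A :=
      monotone_of_deriv_nonneg
        (fun t => (hA' t).differentiableAt)
        (fun t => by rw [(hA' t).deriv]; exact pow_nonneg (q0_nonneg _) k)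
    have hAnn : ∀ s : ℝ, 0 ≤ s → 0 ≤ A s := fun s hs => hA0 ▸ hAmono hs
    -- lower bound on the derivative for s ≥ 0
    have hlow : ∀ s : ℝ, 0 ≤ s → c ^ k ≤ q0 (Φ s v) ^ k := by
      intro s hs
      have hE : 1 ≤ Real.exp (A s) := Real.one_le_exp (hAnn s hs)
      have harg : -(v.1 * Real.exp (A s)) ^ 2 - (v.2 * Real.exp (-A s)) ^ 2
          ≤ -v.1 ^ 2 := by
        have h11 : (1:ℝ) * 1 ≤ Real.exp (A s) * Real.exp (A s) :=
          mul_le_mul hE hE zero_le_one (le_trans zero_le_one hE)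
        nlinarith [sq_nonneg v.1, sq_nonneg (v.2 * Real.exp (-A s)), h11]
      have hq : c ≤ q0 (Φ s v) := by
        rw [hsol s]
        simp only [q0]
        have := Real.exp_le_exp.2 harg
        simp only [hc_def]
        linarith
      exact pow_le_pow_left₀ hc.le hq k
    -- A m ≥ c^k * m
    have hAlb : ∀ m : ℕ, c ^ k * m ≤ A m := by
      intro m
      have hBmono : MonotoneOn (fun t => A t - c ^ k * t) (Set.Ici (0:ℝ)) := by
        apply monotoneOn_of_deriv_nonneg (convex_Ici 0)
        · have hAcont : Continuous A :=
            continuous_iff_continuousAt.2 fun t => (hA' t).continuousAt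
          exact (hAcont.sub (continuous_const.mul continuous_id)).continuousOn
        · intro t ht
          exact ((hA' t).sub (by
            simpa using (hasDerivAt_id t).const_mul (c ^ k))).differentiableAt.differentiableWithinAt
        · intro t ht
          have hd : HasDerivAt (fun t => A t - c ^ k * t) (q0 (Φ t v) ^ k - c ^ k) t :=
            (hA' t).sub (by simpa using (hasDerivAt_id t).const_mul (c ^ k))
          rw [hd.deriv]
          have ht' : (0:ℝ) ≤ t := le_of_lt (by simpa using ht)
          linarith [hlow t ht']
      have := hBmono (Set.mem_Ici.2 le_rfl) (Set.mem_Ici.2 (Nat.cast_nonneg m)) (Nat.cast_nonneg m)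
      simp only [hA0] at this
      linarith
    -- iterates
    have hiter : ∀ m : ℕ, (Φ 1)^[m] v = Φ m v := by
      intro m
      induction m with
      | zero => simp [hΦ0]
      | succ n ih =>
        rw [Function.iterate_succ_apply', ih, ← hΦadd]
        push_cast
        ring_nf
    -- the lower-bounding function tends to infinity
    have hf : Filter.Tendsto (fun m : ℕ => |v.1| * Real.exp (c ^ k * m))
        Filter.atTop Filter.atTop := by
      apply Filter.Tendsto.const_mul_atTop (abs_pos.2 hv)
      apply Real.tendsto_exp_atTop.comp
      exact Filter.Tendsto.const_mul_atTop (pow_pos hc k) tendsto_natCast_atTop_atTop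
    apply Filter.tendsto_atTop_mono _ hf
    intro m
    have h1 : |v.1| * Real.exp (c ^ k * m) ≤ |v.1| * Real.exp (A m) := by
      apply mul_le_mul_of_nonneg_left _ (abs_nonneg _)
      exact Real.exp_le_exp.2 (hAlb m)
    have h2 : |v.1| * Real.exp (A m) = |(Φ (m:ℝ) v).1| := by
      rw [hsol (m:ℝ)]
      rw [abs_mul, abs_of_pos (Real.exp_pos _)]
    have h3 : |(Φ (m:ℝ) v).1| ≤ ‖Φ (m:ℝ) v‖ := by
      have := norm_fst_le (Φ (m:ℝ) v)
      simpa using this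
    rw [hiter m]
    calc |v.1| * Real.exp (c ^ k * m) ≤ |v.1| * Real.exp (A m) := h1
      _ = |(Φ (m:ℝ) v).1| := h2
      _ ≤ ‖Φ (m:ℝ) v‖ := h3
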